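/- Let L(Q) = log det(Ψ Q⁻¹ Ψᵀ + D) + tr(S (Ψ Q⁻¹ Ψᵀ + D)⁻¹) + ‖Λ ∘ Q‖₁ and L̃(Q) = log det(Q + Ψᵀ D⁻¹ Ψ) − log det(Q) − tr(Ψᵀ D⁻¹ S D⁻¹ Ψ (Q + Ψᵀ D⁻¹ Ψ)⁻¹) + ‖Λ ∘ Q‖₁. Then L(Q) − L̃(Q) = log det(D) + tr(S D⁻¹), a constant independent of Q; hence L and L̃ have the same minimizers over positive definite Q. -/
import Mathlib


open Matrix

theorem fsbgl_likelihood_reduction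
    {n J : ℕ}
    (D S : Matrix (Fin n) (Fin n) ℝ) (Ψ : Matrix (Fin n) (Fin J) ℝ)
    (Λ : Matrix (Fin J) (Fin J) ℝ)
    (hD : D.PosDef) (hS : S.PosSemidef) (hΛ : ∀ i j, 0 ≤ Λ i j)
    (L Lt : Matrix (Fin J) (Fin J) ℝ → ℝ)
    (hL : ∀ Q, L Q = Real.log (Ψ * Q⁻¹ * Ψᵀ + D).det
        + (S * (Ψ * Q⁻¹ * Ψᵀ + D)⁻¹).trace
        + ∑ i, ∑ j, |Λ i j * Q i j|)
    (hLt : ∀ Q, Lt Q = Real.log (Q + Ψᵀ * D⁻¹ * Ψ).det - Real.log Q.det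
        - (Ψᵀ * D⁻¹ * S * D⁻¹ * Ψ * (Q + Ψᵀ * D⁻¹ * Ψ)⁻¹).trace
        + ∑ i, ∑ j, |Λ i j * Q i j|) :
    (∀ Q : Matrix (Fin J) (Fin J) ℝ, Q.PosDef →
        L Q - Lt Q = Real.log D.det + (S * D⁻¹).trace) ∧
    (∀ Q₀ : Matrix (Fin J) (Fin J) ℝ, Q₀.PosDef →
        ((∀ Q, Q.PosDef → L Q₀ ≤ L Q) ↔ (∀ Q, Q.PosDef → Lt Q₀ ≤ Lt Q))) := by
  have key : ∀ Q : Matrix (Fin J) (Fin J) ℝ, Q.PosDef →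
      L Q - Lt Q = Real.log D.det + (S * D⁻¹).trace := by
    intro Q hQ
    have hQinv : (Q⁻¹).PosDef := hQ.inv
    have hDinv : (D⁻¹).PosDef := hD.inv
    set M := Q + Ψᵀ * D⁻¹ * Ψ with hMdef
    have hΨDΨ : (Ψᵀ * D⁻¹ * Ψ).PosSemidef := by
      have := hDinv.posSemidef.conjTranspose_mul_mul_same Ψ
      simpa [conjTranspose_eq_transpose_of_trivial] using this
    have hMpd : M.PosDef := hQ.add_posSemidef hΨDΨ
    have hQu : IsUnit Q := hQ.isUnit
    have hQdu : IsUnit Q.det := (isUnit_iff_isUnit_det Q).mp hQu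
    have hDu : IsUnit D := hD.isUnit
    have hDdu : IsUnit D.det := (isUnit_iff_isUnit_det D).mp hDu
    -- determinant identity
    have hfact : Ψ * Q⁻¹ * Ψᵀ + D = D * (D⁻¹ * Ψ * (Q⁻¹ * Ψᵀ) + 1) := by
      rw [Matrix.mul_add, Matrix.mul_one, ← Matrix.mul_assoc, ← Matrix.mul_assoc,
        Matrix.mul_nonsing_inv_cancel_left _ _ hDdu]
    have hdet : (Ψ * Q⁻¹ * Ψᵀ + D).det = D.det * (Q.det⁻¹ * M.det) := by
      rw [hfact, det_mul, det_mul_add_one_comm]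
      congr 1
      have : Q⁻¹ * Ψᵀ * (D⁻¹ * Ψ) + 1 = Q⁻¹ * M := by
        simp only [hMdef, Matrix.mul_add, Matrix.nonsing_inv_mul _ hQdu, Matrix.mul_assoc]
        exact add_comm _ _
      rw [this, det_mul, det_nonsing_inv, Ring.inverse_eq_inv']
    -- Woodbury identity
    have hwood : (Ψ * Q⁻¹ * Ψᵀ + D)⁻¹
        = D⁻¹ - D⁻¹ * Ψ * M⁻¹ * Ψᵀ * D⁻¹ := by
      have hQQ : (Q⁻¹)⁻¹ = Q := Matrix.nonsing_inv_nonsing_inv _ hQdu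
      have hMu : IsUnit ((Q⁻¹)⁻¹ + Ψᵀ * D⁻¹ * Ψ) := by rw [hQQ]; exact hMpd.isUnit
      have := Matrix.add_mul_mul_inv_eq_sub D Ψ Q⁻¹ Ψᵀ hDu hQinv.isUnit hMu
      rw [hQQ] at this
      rw [add_comm (Ψ * Q⁻¹ * Ψᵀ) D, this, hMdef]
    -- trace identity
    have htr : (S * (Ψ * Q⁻¹ * Ψᵀ + D)⁻¹).trace
        = (S * D⁻¹).trace - (Ψᵀ * D⁻¹ * S * D⁻¹ * Ψ * M⁻¹).trace := by
      rw [hwood, Matrix.mul_sub, trace_sub]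
      congr 1
      have h1 : Ψᵀ * D⁻¹ * S * D⁻¹ * Ψ * M⁻¹ = (Ψᵀ * D⁻¹) * (S * D⁻¹ * Ψ * M⁻¹) := by
        simp [Matrix.mul_assoc]
      have h2 : (S * D⁻¹ * Ψ * M⁻¹) * (Ψᵀ * D⁻¹) = S * (D⁻¹ * Ψ * M⁻¹ * Ψᵀ * D⁻¹) := by
        simp [Matrix.mul_assoc]
      calc (S * (D⁻¹ * Ψ * M⁻¹ * Ψᵀ * D⁻¹)).trace
          = ((S * D⁻¹ * Ψ * M⁻¹) * (Ψᵀ * D⁻¹)).trace := by rw [h2]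
        _ = ((Ψᵀ * D⁻¹) * (S * D⁻¹ * Ψ * M⁻¹)).trace := trace_mul_comm _ _
        _ = (Ψᵀ * D⁻¹ * S * D⁻¹ * Ψ * M⁻¹).trace := by rw [h1]
    -- log identity
    have hlog : Real.log (Ψ * Q⁻¹ * Ψᵀ + D).det
        = Real.log D.det - Real.log Q.det + Real.log M.det := by
      rw [hdet,
        Real.log_mul hD.det_pos.ne' (mul_pos (inv_pos.mpr hQ.det_pos) hMpd.det_pos).ne',
        Real.log_mul (inv_pos.mpr hQ.det_pos).ne' hMpd.det_pos.ne', Real.log_inv]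
      ring
    rw [hL Q, hLt Q, htr, hlog, ← hMdef]
    ring
  refine ⟨key, fun Q₀ hQ₀ => ?_⟩
  constructor <;> intro h Q hQ
  · have h1 := key Q hQ
    have h2 := key Q₀ hQ₀
    have := h Q hQ
    linarith
  · have h1 := key Q hQ
    have h2 := key Q₀ hQ₀
    have := h Q hQ
    linarith
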